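/- The function F(κ)/(1 − F(κ)/κ − F(κ)²) is strictly positive for all κ > 0, where F(κ) = I₁(κ)/I₀(κ). Equivalently, the von Mises Fisher information component g_{κκ} = 1 − F(κ)/κ − F(κ)² is strictly positive for κ > 0. -/

import Mathlib

/-- Modified Bessel function of the first kind of integer order (integral representation). -/
noncomputable def besselI (n : ℕ) (x : ℝ) : ℝ :=
  (1 / Real.pi) * ∫ t in (0:ℝ)..Real.pi, Real.exp (x * Real.cos t) * Real.cos (n * t)

/-- Ratio of modified Bessel functions `F(κ) = I₁(κ)/I₀(κ)`. -/
noncomputable def besselRatio (κ : ℝ) : ℝ := besselI 1 κ / besselI 0 κ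

open scoped ENNReal
open Real MeasureTheory intervalIntegral Set Function

/-- `π I₀(κ)`. -/
noncomputable def vmA (κ : ℝ) : ℝ := ∫ t in (0:ℝ)..π, Real.exp (κ * Real.cos t)
/-- `π I₁(κ)`. -/
noncomputable def vmB (κ : ℝ) : ℝ := ∫ t in (0:ℝ)..π, Real.exp (κ * Real.cos t) * Real.cos t
/-- second moment integral. -/
noncomputable def vmC (κ : ℝ) : ℝ := ∫ t in (0:ℝ)..π, Real.exp (κ * Real.cos t) * (Real.cos t)^2

lemma vmA_pos (κ : ℝ) : 0 < vmA κ :=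
  intervalIntegral_pos_of_pos
    ((Real.continuous_exp.comp (continuous_const.mul Real.continuous_cos)).intervalIntegrable 0 π)
    (fun _ => Real.exp_pos _) Real.pi_pos

lemma vmB_pos (κ : ℝ) (hκ : 0 < κ) : 0 < vmB κ := by
  have hc : Continuous fun t : ℝ => Real.exp (κ * Real.cos t) * Real.cos t := by continuity
  have hsplit : vmB κ = (∫ t in (0:ℝ)..(π/2), Real.exp (κ * Real.cos t) * Real.cos t)
      + ∫ t in (π/2:ℝ)..π, Real.exp (κ * Real.cos t) * Real.cos t := by
    rw [vmB, intervalIntegral.integral_add_adjacent_intervals (hc.intervalIntegrable _ _)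
      (hc.intervalIntegrable _ _)]
  have hrefl : (∫ t in (π/2:ℝ)..π, Real.exp (κ * Real.cos t) * Real.cos t)
      = ∫ t in (0:ℝ)..(π/2), Real.exp (κ * Real.cos (π - t)) * Real.cos (π - t) := by
    rw [intervalIntegral.integral_comp_sub_left
      (fun t => Real.exp (κ * Real.cos t) * Real.cos t) π]
    norm_num [sub_half]
  have hsum : vmB κ = ∫ t in (0:ℝ)..(π/2), (Real.exp (κ * Real.cos t) * Real.cos t
      + Real.exp (-(κ * Real.cos t)) * (-Real.cos t)) := by
    rw [hsplit, hrefl, ← intervalIntegral.integral_add (hc.intervalIntegrable _ _)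
      ((by continuity : Continuous fun t : ℝ =>
        Real.exp (κ * Real.cos (π - t)) * Real.cos (π - t)).intervalIntegrable _ _)]
    congr 1; ext t; rw [Real.cos_pi_sub]; ring_nf
  rw [hsum]
  apply intervalIntegral_pos_of_pos_on
  · exact (by continuity : Continuous fun t : ℝ => Real.exp (κ * Real.cos t) * Real.cos t
      + Real.exp (-(κ * Real.cos t)) * (-Real.cos t)).intervalIntegrable _ _
  · intro x hx
    have hcos : 0 < Real.cos x := Real.cos_pos_of_mem_Ioo ⟨by linarith [hx.1, Real.pi_pos], hx.2⟩
    have hexp : Real.exp (-(κ * Real.cos x)) < Real.exp (κ * Real.cos x) :=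
      Real.exp_lt_exp.mpr (by nlinarith)
    nlinarith [Real.exp_pos (-(κ * Real.cos x))]
  · linarith [Real.pi_pos]

lemma vmC_identity (κ : ℝ) : κ * vmC κ = κ * vmA κ - vmB κ := by
  have hderiv : ∀ t ∈ Set.uIcc (0:ℝ) π,
      HasDerivAt (fun t => Real.exp (κ * Real.cos t) * Real.sin t)
      (Real.exp (κ * Real.cos t) * Real.cos t
        - (κ * Real.exp (κ * Real.cos t) - κ * Real.exp (κ * Real.cos t) * (Real.cos t)^2)) t := by
    intro t _
    have h1 : HasDerivAt (fun t => Real.exp (κ * Real.cos t))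
        (Real.exp (κ * Real.cos t) * (κ * (-Real.sin t))) t :=
      (Real.hasDerivAt_exp _).comp t ((Real.hasDerivAt_cos t).const_mul κ)
    have := h1.mul (Real.hasDerivAt_sin t)
    refine this.congr_deriv ?_
    have hs : Real.sin t ^ 2 = 1 - Real.cos t ^ 2 := Real.sin_sq t
    linear_combination (-(κ * Real.exp (κ * Real.cos t))) * hs
  have hint : Continuous (fun t : ℝ => Real.exp (κ * Real.cos t) * Real.cos t
      - (κ * Real.exp (κ * Real.cos t) - κ * Real.exp (κ * Real.cos t) * (Real.cos t)^2)) := by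
    continuity
  have key := intervalIntegral.integral_eq_sub_of_hasDerivAt hderiv (hint.intervalIntegrable 0 π)
  simp [Real.sin_pi] at key
  have hc : Continuous fun t : ℝ => Real.exp (κ * Real.cos t) := by continuity
  erw [intervalIntegral.integral_sub ((hc.mul Real.continuous_cos).intervalIntegrable 0 π)
      (((continuous_const.mul hc).sub ((continuous_const.mul hc).mul
        (Real.continuous_cos.pow 2))).intervalIntegrable 0 π),
    intervalIntegral.integral_sub ((continuous_const.mul hc).intervalIntegrable 0 π)
      (((continuous_const.mul hc).mul (Real.continuous_cos.pow 2)).intervalIntegrable 0 π)] at key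
  have e1 : (∫ t in (0:ℝ)..π, κ * Real.exp (κ * Real.cos t)) = κ * vmA κ := by
    rw [vmA, ← intervalIntegral.integral_const_mul]
  have e2 : (∫ t in (0:ℝ)..π, κ * Real.exp (κ * Real.cos t) * (Real.cos t)^2) = κ * vmC κ := by
    rw [vmC, ← intervalIntegral.integral_const_mul]
    congr 1; ext t; ring
  erw [e1, e2] at key
  have : vmB κ - (κ * vmA κ - κ * vmC κ) = 0 := key
  linarith [this]

lemma vm_var_pos (κ : ℝ) (m : ℝ) : 0 < vmC κ - 2 * m * vmB κ + m ^ 2 * vmA κ := by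
  have hc : Continuous fun t : ℝ => Real.exp (κ * Real.cos t) := by continuity
  set h : ℝ → ℝ := fun t => Real.exp (κ * Real.cos t) * (Real.cos t - m) ^ 2 with hh
  have hch : Continuous h := by continuity
  have hexp : (∫ t in (0:ℝ)..π, h t) = vmC κ - 2 * m * vmB κ + m ^ 2 * vmA κ := by
    have e1 : ∀ t : ℝ, h t = Real.exp (κ * Real.cos t) * (Real.cos t)^2
        - 2 * m * (Real.exp (κ * Real.cos t) * Real.cos t)
        + m ^ 2 * Real.exp (κ * Real.cos t) := by
      intro t; simp only [hh]; ring
    simp only [e1]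
    erw [intervalIntegral.integral_add
        (IntervalIntegrable.sub ((hc.mul (Real.continuous_cos.pow 2)).intervalIntegrable _ _)
        ((continuous_const.mul (hc.mul Real.continuous_cos)).intervalIntegrable _ _))
        ((continuous_const.mul hc).intervalIntegrable _ _),
      intervalIntegral.integral_sub ((hc.mul (Real.continuous_cos.pow 2)).intervalIntegrable _ _)
        ((continuous_const.mul (hc.mul Real.continuous_cos)).intervalIntegrable _ _),
      intervalIntegral.integral_const_mul, intervalIntegral.integral_const_mul]
    rfl
  rw [← hexp]
  rw [intervalIntegral.integral_pos_iff_support_of_nonneg_ae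
    (Filter.Eventually.of_forall (fun t => by positivity)) (hch.intervalIntegrable _ _)]
  refine ⟨Real.pi_pos, ?_⟩
  set S : Set ℝ := {t | t ∈ Icc (0:ℝ) π ∧ Real.cos t = m} with hS
  have hSsub : S.Subsingleton := by
    intro a ha b hb
    exact Real.injOn_cos ha.1 hb.1 (ha.2.trans hb.2.symm)
  have hSzero : volume S = 0 := hSsub.measure_zero _
  have hsub : Ioc 0 π \ S ⊆ support h ∩ Ioc 0 π := by
    intro t ht
    refine ⟨?_, ht.1⟩
    have htm : Real.cos t ≠ m := by
      intro hcm; exact ht.2 ⟨Ioc_subset_Icc_self ht.1, hcm⟩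
    have : 0 < h t :=
      mul_pos (Real.exp_pos _) (pow_two_pos_of_ne_zero (sub_ne_zero.mpr htm))
    exact this.ne'
  calc (0:ℝ≥0∞) < volume (Ioc 0 π \ S) := by
        rw [measure_diff_null hSzero]
        simp [Real.pi_pos]
      _ ≤ volume (support h ∩ Ioc 0 π) := measure_mono hsub

lemma besselRatio_eq (κ : ℝ) : besselRatio κ = vmB κ / vmA κ := by
  have h0 : besselI 0 κ = (1/π) * vmA κ := by
    simp [besselI, vmA]
  have h1 : besselI 1 κ = (1/π) * vmB κ := by
    simp [besselI, vmB]
  rw [besselRatio, h0, h1, mul_div_mul_left _ _ (by positivity : (1:ℝ)/π ≠ 0)]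

lemma vm_alg (κ a b c : ℝ) (ha : a ≠ 0) (hκ : κ ≠ 0) (hc : κ * c = κ * a - b) :
    1 - (b / a) / κ - (b / a) ^ 2 = (a * c - b ^ 2) / a ^ 2 := by
  field_simp
  linear_combination (-a) * hc

/-- The von Mises Fisher information component `g_{κκ} = 1 − F(κ)/κ − F(κ)²` is
strictly positive for all `κ > 0`, and hence so is `F(κ)/(1 − F(κ)/κ − F(κ)²)`. -/
theorem vonMises_gkk_pos (κ : ℝ) (hκ : 0 < κ) :
    0 < 1 - besselRatio κ / κ - (besselRatio κ) ^ 2 ∧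
    0 < besselRatio κ / (1 - besselRatio κ / κ - (besselRatio κ) ^ 2) := by
  have hA := vmA_pos κ
  have hB := vmB_pos κ hκ
  have hC := vmC_identity κ
  have hvar := vm_var_pos κ (vmB κ / vmA κ)
  have hA' : vmA κ ≠ 0 := hA.ne'
  have hACB : 0 < vmA κ * vmC κ - vmB κ ^ 2 := by
    have hrw : vmC κ - 2 * (vmB κ / vmA κ) * vmB κ + (vmB κ / vmA κ) ^ 2 * vmA κ
        = (vmA κ * vmC κ - vmB κ ^ 2) / vmA κ := by
      field_simp; ring
    rw [hrw] at hvar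
    have := mul_pos hvar hA
    rwa [div_mul_cancel₀ _ hA'] at this
  have hFpos : 0 < besselRatio κ := by
    rw [besselRatio_eq]; exact div_pos hB hA
  have hg : 1 - besselRatio κ / κ - (besselRatio κ) ^ 2
      = (vmA κ * vmC κ - vmB κ ^ 2) / vmA κ ^ 2 := by
    rw [besselRatio_eq]
    exact vm_alg κ _ _ _ hA' hκ.ne' hC
  have hgpos : 0 < 1 - besselRatio κ / κ - (besselRatio κ) ^ 2 := by
    rw [hg]; positivity
  exact ⟨hgpos, div_pos hFpos hgpos⟩
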